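/- Let f ∈ H. Suppose (u,p) ∈ V × Q solves the Oseen source problem: a(u,v) + d(p,v) = ⟨f, ι v⟩_H for all v ∈ V and d(q,u) = 0 for all q ∈ Q, and suppose (u_S,p_S) ∈ V × Q solves the corresponding Stokes source problem (the same system with the convective form removed): ν⟨u_S,v⟩_V + d(p_S,v) = ⟨f, ι v⟩_H for all v ∈ V and d(q,u_S) = 0 for all q ∈ Q. Then the energy estimate ν‖u − u_S‖_V² ≤ B‖u‖_V‖ι(u − u_S)‖_H holds. -/

import Mathlib

/-- Energy estimate comparing the Oseen and Stokes source problems with the same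
datum `f`: the velocities satisfy `ν‖u − u_S‖_V² ≤ B‖u‖_V‖ι(u − u_S)‖_H`. -/
theorem oseen_stokes_energy_estimate
    {V H Q : Type*} [NormedAddCommGroup V] [InnerProductSpace ℂ V] [CompleteSpace V]
    [NormedAddCommGroup H] [InnerProductSpace ℂ H] [CompleteSpace H]
    [NormedAddCommGroup Q] [InnerProductSpace ℂ Q] [CompleteSpace Q]
    (ι : V →L[ℂ] H) (C_p : ℝ) (hCp : 0 < C_p)
    (hι : ∀ v : V, ‖ι v‖ ≤ C_p * ‖v‖)
    (ν : ℝ) (hν : 0 < ν)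
    (c : V →ₗ[ℂ] V →ₛₗ[starRingEnd ℂ] ℂ) (B : ℝ) (hB : 0 ≤ B)
    (hc0 : ∀ v : V, (c v v).re = 0)
    (hcb : ∀ u v : V, ‖c u v‖ ≤ B * ‖u‖ * ‖ι v‖)
    (d : Q →ₗ[ℂ] V →ₛₗ[starRingEnd ℂ] ℂ) (M_d : ℝ)
    (hd : ∀ (q : Q) (v : V), ‖d q v‖ ≤ M_d * ‖q‖ * ‖v‖)
    (f : H) (u u_S : V) (p p_S : Q)
    (hsol : ∀ v : V,
      (ν : ℂ) * (inner ℂ v u : ℂ) + c u v + d p v = (inner ℂ (ι v) f : ℂ))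
    (hdiv : ∀ q : Q, d q u = 0)
    (hsolS : ∀ v : V,
      (ν : ℂ) * (inner ℂ v u_S : ℂ) + d p_S v = (inner ℂ (ι v) f : ℂ))
    (hdivS : ∀ q : Q, d q u_S = 0) :
    ν * ‖u - u_S‖ ^ 2 ≤ B * ‖u‖ * ‖ι (u - u_S)‖ := by
  set w := u - u_S with hw
  have hdw : ∀ q : Q, d q w = 0 := by
    intro q
    simp [hw, map_sub, hdiv q, hdivS q]
  -- key identity: ν⟨w,w⟩ + c u w = 0
  have hkey : (ν : ℂ) * (inner ℂ w w : ℂ) + c u w = 0 := by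
    have h1 := hsol w
    have h2 := hsolS w
    have hinner : (inner ℂ w w : ℂ) = (inner ℂ w u : ℂ) - (inner ℂ w u_S : ℂ) := by
      rw [hw]; rw [inner_sub_right]
    rw [hinner]
    have hdp := hdw p
    have hdpS := hdw p_S
    rw [hdp] at h1
    rw [hdpS] at h2
    linear_combination h1 - h2
  have hre : ν * ‖w‖ ^ 2 = -(c u w).re := by
    have := congrArg Complex.re hkey
    have hn : (inner ℂ w w : ℂ).re = ‖w‖ ^ 2 := by
      rw [← inner_self_eq_norm_sq (𝕜 := ℂ) w]; rfl
    simp [Complex.add_re, Complex.mul_re, hn] at this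
    have h3 : ((‖w‖ : ℂ) ^ 2).re = ‖w‖ ^ 2 := by rw [← Complex.ofReal_pow, Complex.ofReal_re]
    rw [h3] at this
    linarith
  calc ν * ‖w‖ ^ 2 = -(c u w).re := hre
    _ ≤ |(c u w).re| := neg_le_abs _
    _ ≤ ‖c u w‖ := Complex.abs_re_le_norm _
    _ ≤ B * ‖u‖ * ‖ι w‖ := hcb u w
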